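/- arXiv:0712.2223 — 4 statements merged into one kernel-verified Lean document; each statement's English description precedes it below -/
import Mathlib

section
/- Let n, k₁, k₂ be natural numbers with k₁, k₂ ≤ n. Let H₁ be an (n−k₁)×n matrix and H₂ an (n−k₂)×n matrix over F₂[D], with Smith decompositions Hᵢ = Aᵢ·[I_{n−kᵢ} 0]·Bᵢ where Aᵢ, Bᵢ are invertible over F₂[D]; let B_{ia} be the first n−kᵢ rows and B_{ib} the last kᵢ rows of Bᵢ. Set E = B_{1a}·σ(B_{2a})ᵀ (an (n−k₁)×(n−k₂) matrix over F₂[D,D⁻¹]) and F = B_{1a}·σ(B_{2b})ᵀ (an (n−k₁)×k₂ matrix). Then A₁⁻¹·H₁·σ(B₂)ᵀ equals the block matrix [E F], and A₂⁻¹·H₂·B₂⁻¹ equals the block matrix [I_{n−k₂} 0]. -/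
open Matrix LaurentPolynomial

/-- The `m × n` matrix `[I 0]` (entry `1` iff row and column index agree as naturals). -/
def oneZero (R : Type*) [Semiring R] (m n : ℕ) : Matrix (Fin m) (Fin n) R :=
  Matrix.of fun i j => if (i : ℕ) = (j : ℕ) then (1 : R) else 0

/-- Concatenate an `r × a` matrix and an `r × b` matrix into an `r × c` matrix,
given `a + b = c`. -/
def hcat {R : Type*} {r a b c : ℕ} (h : a + b = c)
    (M : Matrix (Fin r) (Fin a) R) (N : Matrix (Fin r) (Fin b) R) :
    Matrix (Fin r) (Fin c) R :=
  (Matrix.fromCols M N).submatrix id fun j => finSumFinEquiv.symm (Fin.cast h.symm j)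

lemma oneZero_map {R S : Type*} [Semiring R] [Semiring S] (f : R →+* S) (m n : ℕ) :
    (oneZero R m n).map f = oneZero S m n := by
  ext i j
  simp [oneZero, apply_ite f]

lemma oneZero_mul {R : Type*} [Semiring R] {m n p : ℕ} (h : m ≤ n)
    (M : Matrix (Fin n) (Fin p) R) :
    oneZero R m n * M = M.submatrix (Fin.castLE h) id := by
  ext i j
  rw [Matrix.mul_apply, Finset.sum_eq_single (Fin.castLE h i)]
  · simp [oneZero]
  · intro k _ hk
    simp only [oneZero, Matrix.of_apply]
    rw [if_neg, zero_mul]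
    intro hik
    exact hk (Fin.val_injective hik.symm)
  · simp

/-- With Smith decompositions `Hᵢ = Aᵢ·[I 0]·Bᵢ`, setting
`E = B₁ₐ·σ(B₂ₐ)ᵀ` and `F = B₁ₐ·σ(B₂ᵦ)ᵀ`, we have `A₁⁻¹·H₁·σ(B₂)ᵀ = [E F]` and
`A₂⁻¹·H₂·B₂⁻¹ = [I 0]`. -/
theorem stmt1 (n k₁ k₂ : ℕ) (hk₁ : k₁ ≤ n) (hk₂ : k₂ ≤ n)
    (H₁ : Matrix (Fin (n - k₁)) (Fin n) (Polynomial (ZMod 2)))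
    (H₂ : Matrix (Fin (n - k₂)) (Fin n) (Polynomial (ZMod 2)))
    (A₁ : Matrix (Fin (n - k₁)) (Fin (n - k₁)) (Polynomial (ZMod 2)))
    (A₂ : Matrix (Fin (n - k₂)) (Fin (n - k₂)) (Polynomial (ZMod 2)))
    (B₁ B₂ : Matrix (Fin n) (Fin n) (Polynomial (ZMod 2)))
    (hA₁ : IsUnit A₁.det) (hA₂ : IsUnit A₂.det)
    (hB₁ : IsUnit B₁.det) (hB₂ : IsUnit B₂.det)
    (hH₁ : H₁ = A₁ * oneZero (Polynomial (ZMod 2)) (n - k₁) n * B₁)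
    (hH₂ : H₂ = A₂ * oneZero (Polynomial (ZMod 2)) (n - k₂) n * B₂) :
    let ι : Polynomial (ZMod 2) → LaurentPolynomial (ZMod 2) := Polynomial.toLaurent
    let σ : LaurentPolynomial (ZMod 2) → LaurentPolynomial (ZMod 2) := LaurentPolynomial.invert
    -- the first `n - kᵢ` rows of `Bᵢ`
    let B₁a := B₁.submatrix (fun i : Fin (n - k₁) => Fin.castLE (Nat.sub_le n k₁) i) id
    let B₂a := B₂.submatrix (fun i : Fin (n - k₂) => Fin.castLE (Nat.sub_le n k₂) i) id
    -- the last `k₂` rows of `B₂`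
    let B₂b := B₂.submatrix
      (fun i : Fin k₂ => (⟨(n - k₂) + (i : ℕ), by omega⟩ : Fin n)) id
    let E := (B₁a.map ι) * ((B₂a.map ι).map σ)ᵀ
    let F := (B₁a.map ι) * ((B₂b.map ι).map σ)ᵀ
    ((A₁.map ι)⁻¹ * (H₁.map ι) * ((B₂.map ι).map σ)ᵀ =
        hcat (by omega : (n - k₂) + k₂ = n) E F)
      ∧ A₂⁻¹ * H₂ * B₂⁻¹ = oneZero (Polynomial (ZMod 2)) (n - k₂) n := by
  intro ι σ B₁a B₂a B₂b E F
  have hdet : IsUnit ((A₁.map ι).det) := by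
    have := hA₁.map Polynomial.toLaurent
    rwa [RingHom.map_det] at this
  constructor
  · rw [hH₁, Matrix.map_mul, Matrix.map_mul, ← Matrix.mul_assoc, ← Matrix.mul_assoc,
      Matrix.nonsing_inv_mul _ hdet, Matrix.one_mul,
      show (oneZero (Polynomial (ZMod 2)) (n - k₁) n).map ι = oneZero _ (n - k₁) n from
        oneZero_map Polynomial.toLaurent _ _,
      oneZero_mul (Nat.sub_le n k₁)]
    refine Matrix.ext fun i j => ?_
    rw [Matrix.mul_apply]
    show _ = hcat _ E F i j
    rw [hcat, Matrix.submatrix_apply]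
    have hcast : n = (n - k₂) + k₂ := by omega
    rcases hsum : finSumFinEquiv.symm (Fin.cast hcast j) with j' | j'
    · have hv : (j : ℕ) = (j' : ℕ) := by
        have := congrArg finSumFinEquiv hsum
        rw [Equiv.apply_symm_apply] at this
        simpa using congrArg Fin.val this
      show _ = E i j'
      rw [show E = (B₁a.map ι) * ((B₂a.map ι).map σ)ᵀ from rfl, Matrix.mul_apply]
      refine Finset.sum_congr rfl fun x _ => ?_
      have hrow : (Fin.castLE (Nat.sub_le n k₂) j' : Fin n) = j := Fin.ext hv.symm
      simp [B₁a, B₂a, hrow]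
      exact Or.inl rfl
    · have hv : (j : ℕ) = (n - k₂) + (j' : ℕ) := by
        have := congrArg finSumFinEquiv hsum
        rw [Equiv.apply_symm_apply] at this
        simpa using congrArg Fin.val this
      show _ = F i j'
      rw [show F = (B₁a.map ι) * ((B₂b.map ι).map σ)ᵀ from rfl, Matrix.mul_apply]
      refine Finset.sum_congr rfl fun x _ => ?_
      have hrow : ((⟨(n - k₂) + (j' : ℕ), by omega⟩ : Fin n)) = j := Fin.ext hv.symm
      simp [B₁a, B₂b, ← hrow]
      exact Or.inl rfl
  · rw [hH₂, Matrix.mul_assoc A₂, ← Matrix.mul_assoc A₂⁻¹,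
      Matrix.nonsing_inv_mul _ hA₂, Matrix.one_mul, Matrix.mul_assoc,
      Matrix.mul_nonsing_inv _ hB₂, Matrix.mul_one]
end

section
/- Let H₁ be an (n−k₁)×n matrix and H₂ an (n−k₂)×n matrix over F₂[D,D⁻¹], and let G be the (2n−k₁−k₂)×2n matrix whose Z part is [H₁; 0] and whose X part is [0; H₂]. Let K(G) be the Gram matrix of the shifted symplectic product on the rows of G. Then the rank of K(G) over F₂(D) equals 2·c, where c is the rank over F₂(D) of H₁·σ(H₂)ᵀ = H₁(D)·H₂ᵀ(D⁻¹). (Thus the entanglement-assisted quantum convolutional code built from H₁ and H₂ requires exactly c ebits per frame.) -/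
open Matrix LaurentPolynomial



section Aux
variable {K : Type*} [Field K]

lemma mulVec_map_ringEquiv {m n : Type*} [Fintype n] (e : K ≃+* K) (M : Matrix m n K)
    (v : n → K) : (M.map e).mulVec (fun j => e (v j)) = fun i => e (M.mulVec v i) := by
  funext i
  simp [Matrix.mulVec, dotProduct, map_sum]

lemma mulVec_map_ringEquiv' {m n : Type*} [Fintype n] (e : K ≃+* K) (M : Matrix m n K)
    (v : n → K) : M.mulVec (fun j => e.symm (v j)) = fun i => e.symm ((M.map e).mulVec v i) := by
  funext i
  simp [Matrix.mulVec, dotProduct, map_sum]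

lemma rank_map_ringEquiv {m n : Type*} [Fintype n] (e : K ≃+* K) (M : Matrix m n K) :
    (M.map e).rank = M.rank := by
  have himg : ∀ w : m → K, w ∈ LinearMap.range M.mulVecLin →
      (fun i => e (w i)) ∈ LinearMap.range (M.map e).mulVecLin := by
    rintro w ⟨v, rfl⟩
    exact ⟨fun j => e (v j), by rw [Matrix.mulVecLin_apply, Matrix.mulVecLin_apply,
      mulVec_map_ringEquiv]⟩
  have himg' : ∀ w : m → K, w ∈ LinearMap.range (M.map e).mulVecLin →
      (fun i => e.symm (w i)) ∈ LinearMap.range M.mulVecLin := by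
    rintro w ⟨v, rfl⟩
    exact ⟨fun j => e.symm (v j), by rw [Matrix.mulVecLin_apply, Matrix.mulVecLin_apply,
      mulVec_map_ringEquiv']⟩
  have key : Module.rank K (LinearMap.range M.mulVecLin)
      = Module.rank K (LinearMap.range (M.map e).mulVecLin) := by
    refine rank_eq_of_equiv_equiv (ZeroHom.mk e (map_zero e))
      ⟨⟨fun w => ⟨fun i => e (w.1 i), himg w.1 w.2⟩,
        fun w => ⟨fun i => e.symm (w.1 i), himg' w.1 w.2⟩,
        fun w => Subtype.ext (funext fun i => e.symm_apply_apply (w.1 i)),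
        fun w => Subtype.ext (funext fun i => e.apply_symm_apply (w.1 i))⟩,
        fun w w' => Subtype.ext (funext fun i => map_add e (w.1 i) (w'.1 i))⟩
        e.bijective (fun r w => Subtype.ext (funext fun i => map_mul e r (w.1 i)))
  rw [Matrix.rank, Matrix.rank, Module.finrank, Module.finrank, key]

lemma finrank_prod_submodule {V W : Type*} [AddCommGroup V] [Module K V] [AddCommGroup W]
    [Module K W] [FiniteDimensional K V] [FiniteDimensional K W]
    (p : Submodule K V) (q : Submodule K W) :
    Module.finrank K (p.prod q) = Module.finrank K p + Module.finrank K q := by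
  rw [← Module.finrank_prod (R := K) (M := p) (M' := q)]
  refine LinearEquiv.finrank_eq ?_
  exact
  { toFun := fun x => (⟨x.1.1, x.2.1⟩, ⟨x.1.2, x.2.2⟩)
    invFun := fun x => ⟨(x.1.1, x.2.1), ⟨x.1.2, x.2.2⟩⟩
    left_inv := fun x => rfl
    right_inv := fun x => rfl
    map_add' := fun x y => rfl
    map_smul' := fun r x => rfl }

lemma range_prodMap' {V V' W W' : Type*} [AddCommGroup V] [Module K V] [AddCommGroup W]
    [Module K W] [AddCommGroup V'] [Module K V'] [AddCommGroup W'] [Module K W']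
    (f : V →ₗ[K] V') (g : W →ₗ[K] W') :
    LinearMap.range (f.prodMap g) = (LinearMap.range f).prod (LinearMap.range g) := by
  ext ⟨x, y⟩
  simp only [LinearMap.mem_range, Submodule.mem_prod, LinearMap.prodMap_apply, Prod.ext_iff,
    Prod.exists]
  constructor
  · rintro ⟨a, b, h1, h2⟩; exact ⟨⟨a, h1⟩, ⟨b, h2⟩⟩
  · rintro ⟨⟨a, h1⟩, ⟨b, h2⟩⟩; exact ⟨a, b, h1, h2⟩

lemma rank_fromBlocks_diagonal {m m' n n' : Type*} [Fintype m] [Fintype m'] [Fintype n]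
    [Fintype n'] (A : Matrix m n K) (B : Matrix m' n' K) :
    (Matrix.fromBlocks A 0 0 B).rank = A.rank + B.rank := by
  classical
  set E₁ := LinearEquiv.sumArrowLequivProdArrow n n' K K
  set E₂ := LinearEquiv.sumArrowLequivProdArrow m m' K K
  have hM : (Matrix.fromBlocks A 0 0 B).mulVecLin =
      (E₂.symm.toLinearMap ∘ₗ (A.mulVecLin.prodMap B.mulVecLin)) ∘ₗ E₁.toLinearMap := by
    apply LinearMap.ext; intro v
    funext i
    cases i <;>
      simp [E₁, E₂, Matrix.fromBlocks_mulVec, LinearEquiv.sumArrowLequivProdArrow,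
        Equiv.sumArrowEquivProdArrow, Sum.elim, Matrix.zero_mulVec]
  rw [Matrix.rank, hM, LinearMap.range_comp, LinearEquiv.range, Submodule.map_top,
    LinearMap.range_comp, range_prodMap']
  rw [LinearEquiv.finrank_map_eq, finrank_prod_submodule]
  rfl

lemma rank_reindex_rect {m m' n n' : Type*} [Fintype n] [Fintype n'] (e₁ : m ≃ m')
    (e₂ : n ≃ n') (A : Matrix m n K) : (Matrix.reindex e₁ e₂ A).rank = A.rank := by
  rw [Matrix.rank, Matrix.rank, Matrix.mulVecLin_reindex, LinearMap.range_comp,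
    LinearMap.range_comp, LinearEquiv.range, Submodule.map_top, LinearEquiv.finrank_map_eq]
end Aux



/-- For `H₁, H₂` over `F₂[D,D⁻¹] ⊆ F₂(D)` and `G` the CSS quantum check
matrix with Z part `[H₁; 0]` and X part `[0; H₂]`, the rank over `F₂(D)` of the Gram
matrix `K(G)` of the shifted symplectic product equals `2·c`, where
`c = rank (H₁·σ(H₂)ᵀ)` over `F₂(D)`. Here `ψ` is the inclusion `F₂[D,D⁻¹] → F₂(D)`
(determined by `ψ(D) = D`) and `σ` is the automorphism of `F₂(D)` with `σ(D) = D⁻¹`. -/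
theorem stmt6 (n k₁ k₂ : ℕ) (hk₁ : k₁ ≤ n) (hk₂ : k₂ ≤ n)
    (ψ : LaurentPolynomial (ZMod 2) →+* RatFunc (ZMod 2))
    (hψ : ψ (LaurentPolynomial.T 1) = RatFunc.X)
    (σ : RatFunc (ZMod 2) ≃+* RatFunc (ZMod 2)) (hσ : σ RatFunc.X = RatFunc.X⁻¹)
    (H₁ : Matrix (Fin (n - k₁)) (Fin n) (LaurentPolynomial (ZMod 2)))
    (H₂ : Matrix (Fin (n - k₂)) (Fin n) (LaurentPolynomial (ZMod 2))) :
    let J : Matrix (Fin n ⊕ Fin n) (Fin n ⊕ Fin n) (RatFunc (ZMod 2)) :=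
      Matrix.fromBlocks 0 1 1 0
    let Ω : ((Fin n ⊕ Fin n) → RatFunc (ZMod 2)) → ((Fin n ⊕ Fin n) → RatFunc (ZMod 2)) →
        RatFunc (ZMod 2) :=
      fun g g' => dotProduct (fun p => σ (g p)) (J.mulVec g')
    let G : Matrix (Fin (n - k₁) ⊕ Fin (n - k₂)) (Fin n ⊕ Fin n) (RatFunc (ZMod 2)) :=
      Matrix.fromBlocks (H₁.map ψ) 0 0 (H₂.map ψ)
    let K : Matrix (Fin (n - k₁) ⊕ Fin (n - k₂)) (Fin (n - k₁) ⊕ Fin (n - k₂))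
        (RatFunc (ZMod 2)) :=
      Matrix.of fun p q => Ω (G p) (G q)
    K.rank = 2 * ((H₁.map ψ) * (((H₂.map ψ)).map σ)ᵀ).rank := by
  intro J Ω G K
  -- σ is an involution
  have hσσ : ∀ a, σ (σ a) = a := by
    have h : (σ.toRingHom.comp σ.toRingHom).comp
        (algebraMap (Polynomial (ZMod 2)) (RatFunc (ZMod 2))) =
        (RingHom.id _).comp (algebraMap (Polynomial (ZMod 2)) (RatFunc (ZMod 2))) := by
      apply Polynomial.ringHom_ext'
      · exact RingHom.ext_zmod _ _
      · simp [RatFunc.algebraMap_X, hσ, map_inv₀]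
    exact fun a => RingHom.congr_fun
      (IsLocalization.ringHom_ext (nonZeroDivisors (Polynomial (ZMod 2))) h) a
  set M₁ : Matrix (Fin (n - k₁)) (Fin n) (RatFunc (ZMod 2)) := H₁.map ψ with hM₁
  set M₂ : Matrix (Fin (n - k₂)) (Fin n) (RatFunc (ZMod 2)) := H₂.map ψ with hM₂
  set A' : Matrix (Fin (n - k₁)) (Fin (n - k₂)) (RatFunc (ZMod 2)) :=
    (M₁.map σ) * M₂ᵀ with hA'
  set B' : Matrix (Fin (n - k₂)) (Fin (n - k₁)) (RatFunc (ZMod 2)) :=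
    (M₂.map σ) * M₁ᵀ with hB'
  set M : Matrix (Fin (n - k₁)) (Fin (n - k₂)) (RatFunc (ZMod 2)) :=
    M₁ * (M₂.map σ)ᵀ with hM
  have hΩ : ∀ g g' : (Fin n ⊕ Fin n) → RatFunc (ZMod 2), Ω g g' =
      (∑ i, σ (g (Sum.inl i)) * g' (Sum.inr i)) + ∑ i, σ (g (Sum.inr i)) * g' (Sum.inl i) := by
    intro g g'
    show dotProduct (fun p => σ (g p)) (J.mulVec g') = _
    have hJ : J.mulVec g' = Sum.elim (fun i => g' (Sum.inr i)) (fun i => g' (Sum.inl i)) := by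
      show (Matrix.fromBlocks 0 1 1 0).mulVec g' = _
      rw [Matrix.fromBlocks_mulVec]
      funext i
      cases i <;> simp [Matrix.one_mulVec, Matrix.zero_mulVec]
    rw [hJ]
    simp [dotProduct, Fintype.sum_sum_type]
  have hK : K = Matrix.reindex (Equiv.sumComm (Fin (n - k₂)) (Fin (n - k₁))) (Equiv.refl _)
      (Matrix.fromBlocks B' 0 0 A') := by
    ext p q
    show Ω (G p) (G q) = _
    rw [hΩ]
    cases p <;> cases q <;>
      simp [G, A', B', hM₁, hM₂, Matrix.reindex_apply, Matrix.submatrix_apply, Matrix.mul_apply,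
        Matrix.map_apply, Matrix.transpose_apply]
  have hBM : B' = Mᵀ := by
    rw [hM, Matrix.transpose_mul, Matrix.transpose_transpose]
  have hAM : A' = M.map σ := by
    ext a b
    rw [hA', hM]
    simp [Matrix.map_apply, Matrix.mul_apply, map_sum, hσσ, Matrix.transpose_apply]
  rw [hK, rank_reindex_rect, rank_fromBlocks_diagonal, hBM, hAM, rank_map_ringEquiv,
    Matrix.rank_transpose, two_mul]
end

section
/- Let M be an m×n matrix over F₂[D] that has a right inverse over F₂[D] (there exists an n×m matrix C over F₂[D] with M·C = I_m). Let U (m×m) and V (n×n) be matrices over the Laurent polynomial ring F₂[D,D⁻¹] that are invertible over F₂[D,D⁻¹], and suppose the matrix M′ = U·M·V has all entries in F₂[D]. Then for every k with 1 ≤ k ≤ m, there exists t ≥ 0 such that D^t lies in the ideal of F₂[D] generated by the k×k minors of M′. (Equivalently: every invariant factor of M′ over F₂[D] is a power of D; column and row operations with Laurent polynomials change the invariant factors of a noncatastrophic check matrix only up to powers of D.) -/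
open Matrix LaurentPolynomial

/-- The set of `k × k` minors of an `m × n` matrix: determinants of submatrices obtained
by selecting `k` rows and `k` columns. -/
def minors {R : Type*} [CommRing R] {m n : ℕ} (k : ℕ) (M : Matrix (Fin m) (Fin n) R) :
    Set R :=
  {d | ∃ f : Fin k → Fin m, ∃ g : Fin k → Fin n,
    Function.Injective f ∧ Function.Injective g ∧ d = (M.submatrix f g).det}

lemma rowexp {R : Type*} [CommRing R] {k m : ℕ}
    (A : Matrix (Fin k) (Fin m) R) (P : Matrix (Fin m) (Fin k) R) :
    (A * P).det = ∑ p : Fin k → Fin m, (∏ i, A i (p i)) * (P.submatrix p id).det := by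
  have h : (fun i => (A * P) i) = fun i => ∑ x : Fin m, A i x • P x := by
    funext i j
    simp [Matrix.mul_apply]
  calc (A * P).det
      = Matrix.detRowAlternating (R := R) (n := Fin k) (fun i => ∑ x : Fin m, A i x • P x) := by
        rw [← h]; rfl
    _ = ∑ p : Fin k → Fin m,
          Matrix.detRowAlternating (R := R) (n := Fin k) (fun i => A i (p i) • P (p i)) :=
        (Matrix.detRowAlternating (R := R) (n := Fin k)).toMultilinearMap.map_sum
          (fun i x => A i x • P x)
    _ = ∑ p : Fin k → Fin m, (∏ i, A i (p i)) * (P.submatrix p id).det := by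
        refine Finset.sum_congr rfl fun p _ => ?_
        rw [show (Matrix.detRowAlternating (R := R) (n := Fin k)) (fun i => A i (p i) • P (p i))
              = (Matrix.detRowAlternating (R := R) (n := Fin k)).toMultilinearMap
                  (fun i => A i (p i) • P (p i)) from rfl,
           MultilinearMap.map_smul_univ, smul_eq_mul]
        rfl

lemma colexp {R : Type*} [CommRing R] {k n : ℕ}
    (Q : Matrix (Fin k) (Fin n) R) (B : Matrix (Fin n) (Fin k) R) :
    (Q * B).det = ∑ q : Fin k → Fin n, (∏ i, B (q i) i) * (Q.submatrix id q).det := by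
  have : (Q * B).det = (Bᵀ * Qᵀ).det := by rw [← Matrix.det_transpose, Matrix.transpose_mul]
  rw [this, rowexp]
  refine Finset.sum_congr rfl fun q _ => ?_
  congr 1
  rw [show (Qᵀ).submatrix q id = (Q.submatrix id q)ᵀ from rfl, Matrix.det_transpose]

lemma det_AXB_mem {R : Type*} [CommRing R] {k m n : ℕ}
    (A : Matrix (Fin k) (Fin m) R) (X : Matrix (Fin m) (Fin n) R)
    (B : Matrix (Fin n) (Fin k) R) :
    (A * X * B).det ∈ Ideal.span (minors k X) := by
  rw [colexp]
  refine Ideal.sum_mem _ fun q _ => Ideal.mul_mem_left _ _ ?_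
  have h1 : (A * X).submatrix id q = A * (X.submatrix id q) := by
    ext i j; simp [Matrix.mul_apply]
  rw [h1, rowexp]
  refine Ideal.sum_mem _ fun p _ => Ideal.mul_mem_left _ _ ?_
  have h2 : (X.submatrix id q).submatrix p id = X.submatrix p q := rfl
  rw [h2]
  by_cases hp : Function.Injective p
  · by_cases hq : Function.Injective q
    · exact Ideal.subset_span ⟨p, q, hp, hq, rfl⟩
    · obtain ⟨a, b, hab, hne⟩ := Function.not_injective_iff.mp hq
      rw [Matrix.det_zero_of_column_eq hne (fun r => by simp [Matrix.submatrix_apply, hab])]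
      exact Ideal.zero_mem _
  · obtain ⟨a, b, hab, hne⟩ := Function.not_injective_iff.mp hp
    rw [Matrix.det_zero_of_row_eq hne (funext fun r => by simp [Matrix.submatrix_apply, hab])]
    exact Ideal.zero_mem _

lemma one_mem_minors {R : Type*} [CommRing R] {m n k : ℕ} (hkm : k ≤ m)
    (M : Matrix (Fin m) (Fin n) R) (C : Matrix (Fin n) (Fin m) R) (hC : M * C = 1) :
    (1 : R) ∈ Ideal.span (minors k M) := by
  set ι : Fin k → Fin m := Fin.castLE hkm with hι
  have hιinj : Function.Injective ι := Fin.castLE_injective hkm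
  set A : Matrix (Fin k) (Fin m) R := fun i x => if ι i = x then 1 else 0 with hA
  have hAM : ∀ (N : Matrix (Fin m) (Fin n) R), A * N = N.submatrix ι id := by
    intro N; ext i j; rw [Matrix.mul_apply]; simp [hA]
  have key : A * M * (C.submatrix id ι) = 1 := by
    have : A * M * (C.submatrix id ι) = (M * C).submatrix ι ι := by
      rw [hAM]; ext i j; simp [Matrix.mul_apply]
    rw [this, hC]
    ext i j
    simp [Matrix.one_apply, hιinj.eq_iff]
  have := det_AXB_mem A M (C.submatrix id ι)
  rwa [key, Matrix.det_one] at this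

/-- Let `M` be an `m × n` matrix over `F₂[D]` with a right inverse over
`F₂[D]`, let `U, V` be invertible over `F₂[D,D⁻¹]`, and suppose `M′ = U·M·V` has all
entries in `F₂[D]` (i.e. `M′` is the image of a polynomial matrix `M''`). Then for every
`1 ≤ k ≤ m` some power `D^t` lies in the ideal of `F₂[D]` generated by the `k × k`
minors of `M′`. -/
theorem stmt8 (m n : ℕ)
    (M : Matrix (Fin m) (Fin n) (Polynomial (ZMod 2)))
    (C : Matrix (Fin n) (Fin m) (Polynomial (ZMod 2))) (hC : M * C = 1)
    (U : Matrix (Fin m) (Fin m) (LaurentPolynomial (ZMod 2)))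
    (V : Matrix (Fin n) (Fin n) (LaurentPolynomial (ZMod 2)))
    (hU : IsUnit U.det) (hV : IsUnit V.det)
    (M'' : Matrix (Fin m) (Fin n) (Polynomial (ZMod 2)))
    (hM'' : M''.map (Polynomial.toLaurent (R := ZMod 2)) =
      U * (M.map (Polynomial.toLaurent (R := ZMod 2))) * V) :
    ∀ k : ℕ, 1 ≤ k → k ≤ m →
      ∃ t : ℕ, (Polynomial.X : Polynomial (ZMod 2)) ^ t ∈ Ideal.span (minors k M'') := by
  intro k _ hkm
  set φ : Polynomial (ZMod 2) →+* LaurentPolynomial (ZMod 2) :=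
    Polynomial.toLaurent (R := ZMod 2) with hφ
  set Mφ := M.map φ with hMφdef
  set M''φ := M''.map φ with hM''φdef
  -- invert U, V
  have hMφ : Mφ = U⁻¹ * M''φ * V⁻¹ := by
    rw [hM'']
    have : U⁻¹ * (U * Mφ * V) * V⁻¹ = (U⁻¹ * U) * Mφ * (V * V⁻¹) := by
      simp only [Matrix.mul_assoc]
    rw [this, Matrix.nonsing_inv_mul U hU, Matrix.mul_nonsing_inv V hV,
      Matrix.one_mul, Matrix.mul_one]
  -- minors commute with the ring hom
  have hminor : ∀ (p : ℕ) (N : Matrix (Fin m) (Fin n) (Polynomial (ZMod 2)))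
      (f : Fin p → Fin m) (g : Fin p → Fin n),
      ((N.map φ).submatrix f g).det = φ ((N.submatrix f g).det) := by
    intro p N f g
    rw [φ.map_det]
    rfl
  -- 1 belongs to the span of the minors of Mφ
  have h1 : (1 : LaurentPolynomial (ZMod 2)) ∈ Ideal.span (minors k Mφ) := by
    have h0 : (1 : Polynomial (ZMod 2)) ∈ Ideal.span (minors k M) := one_mem_minors hkm M C hC
    have := Ideal.mem_map_of_mem φ h0
    rw [_root_.map_one, Ideal.map_span] at this
    refine Ideal.span_mono ?_ this
    rintro d ⟨e, ⟨f, g, hf, hg, rfl⟩, rfl⟩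
    exact ⟨f, g, hf, hg, (hminor k M f g).symm⟩
  -- minors of Mφ lie in the span of minors of M''φ
  have h2 : Ideal.span (minors k Mφ) ≤ Ideal.span (minors k M''φ) := by
    rw [Ideal.span_le]
    rintro d ⟨f, g, hf, hg, rfl⟩
    have : Mφ.submatrix f g = (U⁻¹.submatrix f id) * M''φ * (V⁻¹.submatrix id g) := by
      rw [hMφ]
      ext i j
      simp [Matrix.mul_apply, Finset.sum_mul, Finset.mul_sum]
    rw [this]
    exact det_AXB_mem _ _ _
  -- hence 1 is in the image ideal
  have h3 : (1 : LaurentPolynomial (ZMod 2)) ∈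
      Ideal.map (algebraMap (Polynomial (ZMod 2)) (LaurentPolynomial (ZMod 2)))
        (Ideal.span (minors k M'')) := by
    have halg : (algebraMap (Polynomial (ZMod 2)) (LaurentPolynomial (ZMod 2))) = φ :=
      RingHom.ext fun f => LaurentPolynomial.algebraMap_eq_toLaurent f
    rw [halg, Ideal.map_span]
    refine Ideal.span_mono ?_ (h2 h1)
    rintro d ⟨f, g, hf, hg, rfl⟩
    exact ⟨(M''.submatrix f g).det, ⟨f, g, hf, hg, rfl⟩, (hminor k M'' f g).symm⟩
  -- clear denominators using localization at powers of X
  haveI := LaurentPolynomial.isLocalization (R := ZMod 2)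
  rw [IsLocalization.mem_map_algebraMap_iff
    (Submonoid.powers (Polynomial.X : Polynomial (ZMod 2))) (LaurentPolynomial (ZMod 2))] at h3
  obtain ⟨⟨a, s⟩, hx⟩ := h3
  obtain ⟨t, ht⟩ := s.2
  refine ⟨t, ?_⟩
  have hXa : (Polynomial.X : Polynomial (ZMod 2)) ^ t = (a : Polynomial (ZMod 2)) := by
    apply Polynomial.toLaurent_injective
    have : algebraMap (Polynomial (ZMod 2)) (LaurentPolynomial (ZMod 2)) ((s : Polynomial (ZMod 2)))
        = algebraMap _ _ ((a : Polynomial (ZMod 2))) := by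
      simpa using hx
    rw [← ht] at this
    simpa [LaurentPolynomial.algebraMap_eq_toLaurent] using this
  rw [hXa]
  exact a.2
end

section
/- Let f be a polynomial over F₂ with constant coefficient 1 and degree at least 1. Then f is invertible as a formal power series over F₂, and its power-series inverse has purely periodic coefficients: there exists an integer N ≥ 1 such that for all n ≥ 0, the coefficient of D^{n+N} in f⁻¹ equals the coefficient of D^n in f⁻¹. (This is the repeating pattern of the long-division expansion of the rational function 1/f(D), which underlies the realization of infinite-depth operations by a periodic sequence of CNOT gates.) -/
/-- A polynomial over `F₂` with constant coefficient `1` and degree at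
least `1` is invertible as a formal power series, and the coefficients of its
power-series inverse are purely periodic: for some `N ≥ 1`, the coefficient of
`D^{n+N}` in `f⁻¹` equals that of `D^n`, for all `n ≥ 0`. -/
theorem stmt12 (f : Polynomial (ZMod 2)) (hf : f.coeff 0 = 1) (hdeg : 1 ≤ f.natDegree) :
    IsUnit (↑f : PowerSeries (ZMod 2)) ∧
    ∃ N : ℕ, 1 ≤ N ∧ ∀ n : ℕ,
      PowerSeries.coeff (R := ZMod 2) (n + N) (↑f : PowerSeries (ZMod 2))⁻¹ =
      PowerSeries.coeff (R := ZMod 2) n (↑f : PowerSeries (ZMod 2))⁻¹ := by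
  have hf0 : f ≠ 0 := fun h => by simp [h] at hf
  have hcc : PowerSeries.constantCoeff (R := ZMod 2) (↑f : PowerSeries (ZMod 2)) ≠ 0 := by
    simp [hf]
  have hmul : (↑f : PowerSeries (ZMod 2)) * (↑f : PowerSeries (ZMod 2))⁻¹ = 1 :=
    PowerSeries.mul_inv_cancel _ hcc
  refine ⟨IsUnit.of_mul_eq_one _ hmul, ?_⟩
  -- X is a unit in AdjoinRoot f
  have hpb := AdjoinRoot.powerBasis hf0
  haveI : Module.Finite (ZMod 2) (AdjoinRoot f) := hpb.finite
  haveI : Finite (AdjoinRoot f) := Module.finite_of_finite (ZMod 2)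
  have hXunit : IsUnit (AdjoinRoot.mk f Polynomial.X) := by
    refine IsUnit.of_mul_eq_one (AdjoinRoot.mk f (-(f.divX))) ?_
    have h1 : Polynomial.X * f.divX + Polynomial.C (f.coeff 0) = f := Polynomial.X_mul_divX_add f
    have : (AdjoinRoot.mk f) (Polynomial.X * f.divX + Polynomial.C (f.coeff 0)) = 0 := by
      rw [h1, AdjoinRoot.mk_self]
    rw [map_add, map_mul] at this
    rw [map_neg, mul_neg, ← neg_add_eq_zero]
    simpa [hf] using this
  obtain ⟨u, hu⟩ := hXunit
  haveI : Finite (AdjoinRoot f)ˣ := inferInstance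
  have hN : 0 < orderOf u := orderOf_pos u
  set N := orderOf u with hNdef
  have hXN : (AdjoinRoot.mk f) (Polynomial.X ^ N - 1) = 0 := by
    have := pow_orderOf_eq_one u
    have h2 : (AdjoinRoot.mk f Polynomial.X) ^ N = 1 := by
      rw [← hu, ← Units.val_pow_eq_pow_val, this, Units.val_one]
    rw [map_sub, map_pow, map_one, h2, sub_self]
  rw [AdjoinRoot.mk_eq_zero] at hXN
  obtain ⟨g, hg⟩ := hXN
  -- degree bound on g
  have hXNdeg : (Polynomial.X ^ N - 1 : Polynomial (ZMod 2)).natDegree = N := by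
    simpa using Polynomial.natDegree_X_pow_sub_C (n := N) (r := (1 : ZMod 2))
  have hg0 : g ≠ 0 := by
    rintro rfl
    rw [mul_zero] at hg
    have : (Polynomial.X ^ N - 1 : Polynomial (ZMod 2)).natDegree = 0 := by rw [hg]; simp
    omega
  have hdegs : f.natDegree + g.natDegree = N := by
    rw [← Polynomial.natDegree_mul hf0 hg0, ← hg, hXNdeg]
  have hgdeg : g.natDegree < N := by omega
  refine ⟨N, hN, fun n => ?_⟩
  -- power series identity: X^N * f⁻¹ = f⁻¹ + g
  set h : PowerSeries (ZMod 2) := (↑f : PowerSeries (ZMod 2))⁻¹ with hh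
  have key : (PowerSeries.X : PowerSeries (ZMod 2)) ^ N * h = h + ↑g := by
    have : ((Polynomial.X ^ N - 1 : Polynomial (ZMod 2)) : PowerSeries (ZMod 2)) = ↑f * ↑g := by
      rw [hg]; push_cast; ring
    have h3 : (PowerSeries.X ^ N - 1 : PowerSeries (ZMod 2)) = ↑f * ↑g := by
      rw [← this]; push_cast; ring
    have h4 := congrArg (· * h) h3
    simp only [sub_mul, one_mul, mul_assoc] at h4
    rw [mul_left_comm, hmul, mul_one] at h4
    linear_combination h4
  have h5 := congrArg (PowerSeries.coeff (R := ZMod 2) (n + N)) key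
  rw [PowerSeries.coeff_X_pow_mul, map_add, Polynomial.coeff_coe,
    Polynomial.coeff_eq_zero_of_natDegree_lt (by omega), add_zero] at h5
  exact h5.symm
end
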